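/- arXiv:2212.05348 — 7 statements merged into one kernel-verified Lean document; each statement's English description precedes it below -/
import Mathlib

section
/- Let V ⊆ F^n be a finite set of inputs for a finite field F with |F| ≥ 2, and suppose V has a diagonal of length l, i.e., there exists a point p ∈ V which differs from every other point of V in at least l ≥ 2 coordinates. Then there exists an output assignment T: V → F such that the monomial ideal I = ⟨m(s,s') : T(s) ≠ T(s')⟩, where m(s,s') = ∏_{s_i ≠ s'_i} x_i, has at least l minimal primes; equivalently, the data set (V,T) has at least l unsigned min-sets. -/
open MvPolynomial

/-- The squarefree monomial `m(p,q)` recording the coordinates where `p` and `q`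
differ. -/
noncomputable def diffMon {n : ℕ} {F : Type*} [DecidableEq F] (R : Type*) [CommRing R]
    (p q : Fin n → F) : MvPolynomial (Fin n) R :=
  ∏ i ∈ Finset.univ.filter (fun i => p i ≠ q i), X i

/-- If an input set `V` (containing at least two points) has a diagonal of
length `l ≥ 2` at a point `p` (i.e., `p` differs from every other point of `V`
in at least `l` coordinates), then there is an output assignment `T` such that
the ideal generated by the monomials `m(s,s')` over pairs with `T s ≠ T s'` has
at least `l` minimal primes (i.e., at least `l` unsigned min-sets). -/
theorem stmt7 {n : ℕ} {F : Type*} [Field F] [Fintype F] [DecidableEq F]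
    (V : Finset (Fin n → F)) (p : Fin n → F) (hp : p ∈ V)
    (hV : ∃ q ∈ V, q ≠ p) (l : ℕ) (hl : 2 ≤ l)
    (hdiag : ∀ q ∈ V, q ≠ p → l ≤ hammingDist p q) :
    ∃ T : (Fin n → F) → F,
      l ≤ (Ideal.minimalPrimes (Ideal.span
        {m : MvPolynomial (Fin n) F |
          ∃ s ∈ V, ∃ s' ∈ V, T s ≠ T s' ∧ m = diffMon F s s'})).ncard := by
  classical
  set R := MvPolynomial (Fin n) F
  set T : (Fin n → F) → F := fun s => if s = p then 0 else 1 with hT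
  refine ⟨T, ?_⟩
  set G : Set R :=
    {m : R | ∃ s ∈ V, ∃ s' ∈ V, T s ≠ T s' ∧ m = diffMon F s s'} with hG
  set I : Ideal R := Ideal.span G with hI
  -- the edge of a point q
  set E : (Fin n → F) → Finset (Fin n) :=
    fun q => Finset.univ.filter (fun i => p i ≠ q i) with hE
  -- choose a minimum-cardinality edge
  obtain ⟨q', hq'V, hq'p⟩ := hV
  have hW : (V.erase p).Nonempty := ⟨q', Finset.mem_erase.2 ⟨hq'p, hq'V⟩⟩
  obtain ⟨q₀, hq₀W, hq₀min⟩ := Finset.exists_min_image (V.erase p) (fun q => (E q).card) hW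
  obtain ⟨hq₀p, hq₀V⟩ := Finset.mem_erase.1 hq₀W
  set S₀ : Finset (Fin n) := E q₀ with hS₀
  -- symmetry of diffMon
  have hdiffsymm : ∀ s s' : Fin n → F, diffMon F s s' = diffMon F s' s := by
    intro s s'
    unfold diffMon
    refine Finset.prod_congr (Finset.filter_congr ?_) (fun _ _ => rfl)
    intro x _; exact ne_comm
  -- basic membership: the min edge monomial is a generator
  have hgen : ∀ q ∈ V, q ≠ p → diffMon F p q ∈ G := by
    intro q hqV hqp
    refine ⟨p, hp, q, hqV, ?_, rfl⟩
    simp only [hT, if_pos rfl, if_neg hqp]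
    exact zero_ne_one
  -- the homomorphisms
  set ψ : Fin n → (R →ₐ[F] R) :=
    fun i => aeval (fun k => if k = i ∨ k ∉ S₀ then (0 : R) else X k) with hψ
  set P : Fin n → Ideal R := fun i => RingHom.ker (ψ i) with hP
  have hPprime : ∀ i, (P i).IsPrime := fun i => RingHom.ker_isPrime (ψ i)
  -- every edge meets {i} ∪ S₀ᶜ
  have hmeet : ∀ i ∈ S₀, ∀ q ∈ V, q ≠ p → ∃ j ∈ E q, j = i ∨ j ∉ S₀ := by
    intro i hi q hqV hqp
    by_cases hsub : E q ⊆ S₀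
    · have hcard : S₀.card ≤ (E q).card :=
        hq₀min q (Finset.mem_erase.2 ⟨hqp, hqV⟩)
      have : E q = S₀ := Finset.eq_of_subset_of_card_le hsub hcard
      exact ⟨i, this ▸ hi, Or.inl rfl⟩
    · obtain ⟨j, hjE, hjS⟩ := Finset.not_subset.1 hsub
      exact ⟨j, hjE, Or.inr hjS⟩
  -- the span is inside each kernel
  have hIP : ∀ i ∈ S₀, I ≤ P i := by
    intro i hi
    rw [hI, Ideal.span_le]
    rintro m ⟨s, hsV, s', hs'V, hTs, rfl⟩
    -- exactly one of s, s' is p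
    have hone : (s = p ∧ s' ≠ p) ∨ (s' = p ∧ s ≠ p) := by
      by_cases h1 : s = p <;> by_cases h2 : s' = p
      · exact absurd (by simp [hT, h1, h2]) hTs
      · exact Or.inl ⟨h1, h2⟩
      · exact Or.inr ⟨h2, h1⟩
      · exact absurd (by simp [hT, h1, h2]) hTs
    have key : ∀ q ∈ V, q ≠ p → diffMon F p q ∈ P i := by
      intro q hqV hqp
      obtain ⟨j, hjE, hj⟩ := hmeet i hi q hqV hqp
      show ψ i (diffMon F p q) = 0
      unfold diffMon
      rw [map_prod]
      refine Finset.prod_eq_zero (hjE : j ∈ E q) ?_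
      show aeval _ (X j) = _
      rw [aeval_X, if_pos hj]
    rcases hone with ⟨h1, h2⟩ | ⟨h1, h2⟩
    · subst h1; exact key s' hs'V h2
    · subst h1; rw [hdiffsymm]; exact key s hsV h2
  -- for each i in S₀ produce a minimal prime containing X i and no other X i'
  have key : ∀ i ∈ S₀, ∃ Q ∈ I.minimalPrimes,
      X i ∈ Q ∧ ∀ i' ∈ S₀, i' ≠ i → X (R := F) i' ∉ Q := by
    intro i hi
    have := hPprime i
    obtain ⟨Q, hQmin, hQP⟩ := Ideal.exists_minimalPrimes_le (hIP i hi)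
    have hQprime : Q.IsPrime := hQmin.1.1
    have hQI : I ≤ Q := hQmin.1.2
    have hprod : (∏ j ∈ S₀, X (R := F) j) ∈ Q := by
      apply hQI
      apply Ideal.subset_span
      exact hgen q₀ hq₀V hq₀p
    obtain ⟨j, hjS, hjQ⟩ := (Ideal.IsPrime.prod_mem_iff (hp := hQprime)).1 hprod
    have hjP : X (R := F) j ∈ P i := hQP hjQ
    have hji : j = i := by
      by_contra hne
      have hcond : ¬ (j = i ∨ j ∉ S₀) := by
        push_neg; exact ⟨hne, hjS⟩
      have : ψ i (X j) = X j := by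
        show aeval _ (X j) = _
        rw [aeval_X, if_neg hcond]
      have hz : ψ i (X j) = 0 := hjP
      rw [this] at hz
      exact X_ne_zero j hz
    refine ⟨Q, hQmin, hji ▸ hjQ, ?_⟩
    intro i' hi'S hi'i hmem
    have : X (R := F) i' ∈ P i := hQP hmem
    have hcond : ¬ (i' = i ∨ i' ∉ S₀) := by
      push_neg; exact ⟨hi'i, hi'S⟩
    have heq : ψ i (X i') = X i' := by
      show aeval _ (X i') = _
      rw [aeval_X, if_neg hcond]
    have hz : ψ i (X i') = 0 := this
    rw [heq] at hz
    exact X_ne_zero i' hz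
  choose! Q hQmin hXmem hXnot using key
  -- injectivity on S₀
  have hinj : Set.InjOn Q ↑S₀ := by
    intro a ha b hb hab
    by_contra hne
    exact hXnot b (by simpa using hb) a (by simpa using ha) hne (hab ▸ hXmem a (by simpa using ha))
  have hsub : Q '' ↑S₀ ⊆ I.minimalPrimes := by
    rintro _ ⟨i, hi, rfl⟩
    exact hQmin i (by simpa using hi)
  -- finiteness of minimal primes
  have hfin : I.minimalPrimes.Finite := by
    rw [Ideal.minimalPrimes_eq_comap]
    exact (minimalPrimes.finite_of_isNoetherianRing _).image _
  -- counting
  have hcard : l ≤ S₀.card := by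
    have := hdiag q₀ hq₀V hq₀p
    have heq : hammingDist p q₀ = S₀.card := by
      simp only [hS₀, hE, hammingDist]
    omega
  calc l ≤ S₀.card := hcard
    _ = (↑S₀ : Set (Fin n)).ncard := (Set.ncard_coe_finset S₀).symm
    _ = (Q '' ↑S₀).ncard := (Set.ncard_image_of_injOn hinj).symm
    _ ≤ I.minimalPrimes.ncard := Set.ncard_le_ncard hsub hfin
end

section
/- Let I be a squarefree monomial ideal of F[x_1,...,x_n] generated only by monomials of degree at least l. Then I has at least l minimal primes (counting with the convention that each minimal prime is generated by a subset of variables). -/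
open MvPolynomial

/-- A squarefree monomial ideal generated (nontrivially) only by monomials of
degree at least `l` has at least `l` minimal primes. -/
theorem stmt8 {n : ℕ} {F : Type*} [Field F] (l : ℕ) (M : Set (Finset (Fin n)))
    (hM : M.Nonempty) (hdeg : ∀ σ ∈ M, l ≤ σ.card) :
    l ≤ (Ideal.minimalPrimes (Ideal.span
      ((fun σ => ∏ i ∈ σ, (X i : MvPolynomial (Fin n) F)) '' M))).ncard := by
  classical
  set I : Ideal (MvPolynomial (Fin n) F) :=
    Ideal.span ((fun σ => ∏ i ∈ σ, (X i : MvPolynomial (Fin n) F)) '' M) with hI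
  -- pick σ₀ ∈ M of minimal cardinality
  have hne : (Finset.card '' M).Nonempty := hM.image _
  obtain ⟨σ₀, hσ₀M, hcard⟩ : ∃ σ ∈ M, σ.card = sInf (Finset.card '' M) := by
    have := Nat.sInf_mem hne
    obtain ⟨σ, hσ, h⟩ := this
    exact ⟨σ, hσ, h⟩
  have hmin : ∀ σ ∈ M, σ₀.card ≤ σ.card := fun σ hσ => by
    rw [hcard]; exact Nat.sInf_le ⟨σ, hσ, rfl⟩
  -- the evaluation maps
  set φ : Fin n → (MvPolynomial (Fin n) F →ₐ[F] MvPolynomial (Fin n) F) :=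
    fun i => aeval (fun j => if j ∈ σ₀.erase i then X j else 0) with hφ
  -- every σ ∈ M is not contained in σ₀.erase i
  have hnotsub : ∀ i ∈ σ₀, ∀ σ ∈ M, ¬ σ ⊆ σ₀.erase i := by
    intro i hi σ hσ hsub
    have h1 : σ.card ≤ (σ₀.erase i).card := Finset.card_le_card hsub
    have h2 : (σ₀.erase i).card < σ₀.card := Finset.card_erase_lt_of_mem hi
    exact absurd (hmin σ hσ) (by omega)
  -- I is contained in the kernel of φ i
  have hIker : ∀ i ∈ σ₀, I ≤ RingHom.ker (φ i).toRingHom := by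
    intro i hi
    rw [hI, Ideal.span_le]
    rintro - ⟨σ, hσ, rfl⟩
    obtain ⟨j, hjσ, hjni⟩ := Finset.not_subset.mp (hnotsub i hi σ hσ)
    simp only [SetLike.mem_coe, RingHom.mem_ker, AlgHom.toRingHom_eq_coe,
      RingHom.coe_coe, map_prod]
    refine Finset.prod_eq_zero hjσ ?_
    simp only [hφ, aeval_X, if_neg hjni]
  -- kernels are prime
  have hker_prime : ∀ i : Fin n, (RingHom.ker (φ i).toRingHom).IsPrime :=
    fun i => RingHom.ker_isPrime _
  -- choose minimal primes below the kernels
  have hex : ∀ i : Fin n, ∃ p : Ideal (MvPolynomial (Fin n) F),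
      i ∈ σ₀ → p ∈ I.minimalPrimes ∧ p ≤ RingHom.ker (φ i).toRingHom := by
    intro i
    by_cases hi : i ∈ σ₀
    · have := hker_prime i
      obtain ⟨p, hp, hple⟩ := Ideal.exists_minimalPrimes_le (hIker i hi)
      exact ⟨p, fun _ => ⟨hp, hple⟩⟩
    · exact ⟨⊥, fun h => absurd h hi⟩
  choose P hP using hex
  -- X j ∉ P i for j ∈ σ₀.erase i
  have hXnot : ∀ i ∈ σ₀, ∀ j ∈ σ₀.erase i, (X j : MvPolynomial (Fin n) F) ∉ P i := by
    intro i hi j hj hmem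
    have := (hP i hi).2 hmem
    rw [RingHom.mem_ker] at this
    simp only [AlgHom.toRingHom_eq_coe, RingHom.coe_coe, hφ, aeval_X, if_pos hj] at this
    exact X_ne_zero j this
  -- X i ∈ P i
  have hXin : ∀ i ∈ σ₀, (X i : MvPolynomial (Fin n) F) ∈ P i := by
    intro i hi
    have hIle : I ≤ P i := (hP i hi).1.1.2
    have hprime : (P i).IsPrime := (hP i hi).1.1.1
    have hprod : (∏ j ∈ σ₀, (X j : MvPolynomial (Fin n) F)) ∈ P i :=
      hIle (Ideal.subset_span ⟨σ₀, hσ₀M, rfl⟩)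
    obtain ⟨j, hjσ₀, hjP⟩ := (Ideal.IsPrime.prod_mem_iff).mp hprod
    rcases eq_or_ne j i with rfl | hji
    · exact hjP
    · exact absurd hjP (hXnot i hi j (Finset.mem_erase.mpr ⟨hji, hjσ₀⟩))
  -- P is injective on σ₀
  have hinj : Set.InjOn P ↑σ₀ := by
    intro i hi i' hi' heq
    by_contra hne'
    have : (X i : MvPolynomial (Fin n) F) ∈ P i' := heq ▸ hXin i hi
    exact hXnot i' hi' i (Finset.mem_erase.mpr ⟨hne', hi⟩) this
  -- minimal primes are finite (Noetherian ring)
  have hfin : I.minimalPrimes.Finite := by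
    rw [Ideal.minimalPrimes_eq_comap]
    exact (minimalPrimes.finite_of_isNoetherianRing _).image _
  -- conclude
  have himg : P '' ↑σ₀ ⊆ I.minimalPrimes := by
    rintro - ⟨i, hi, rfl⟩
    exact (hP i (by simpa using hi)).1
  calc l ≤ σ₀.card := hdeg σ₀ hσ₀M
    _ = (P '' ↑σ₀).ncard := by
        rw [Set.ncard_image_of_injOn hinj, Set.ncard_coe_finset]
    _ ≤ I.minimalPrimes.ncard := Set.ncard_le_ncard himg hfin
end

section
/- Let V ⊆ F^n be a finite input set over a finite field F. If V is cylindrically connected, then for every output assignment T: V → F, the ideal I = ⟨m(p,q) : p,q ∈ V, T(p) ≠ T(q)⟩, where m(p,q) = ∏_{p_i ≠ q_i} x_i, is generated by a subset of the variables {x_1,...,x_n}; in particular I is prime and there is exactly one unsigned min-set. -/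
open MvPolynomial

/-- A set `S ⊆ F^n` is connected if any two of its points are joined by a
sequence inside `S` whose consecutive points are at Hamming distance 1. -/
def PathConn {n : ℕ} {F : Type*} [DecidableEq F] (S : Set (Fin n → F)) : Prop :=
  ∀ p ∈ S, ∀ q ∈ S, ∃ (l : ℕ) (c : ℕ → (Fin n → F)),
    c 0 = p ∧ c l = q ∧ (∀ k ≤ l, c k ∈ S) ∧ ∀ k < l, hammingDist (c k) (c (k + 1)) = 1

/-- A cylinder: a set where some coordinates are frozen to fixed values. -/
def IsCylinder {n : ℕ} {F : Type*} (C : Set (Fin n → F)) : Prop :=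
  ∃ (N : Set (Fin n)) (u : Fin n → F), C = {s | ∀ i ∈ N, s i = u i}

/-- An ideal generated by a subset of the variables is prime (over a domain). -/
theorem span_X_image_isPrime {σ : Type*} {R : Type*} [CommRing R] [IsDomain R] (A : Set σ) :
    (Ideal.span ((fun i => (X i : MvPolynomial σ R)) '' A)).IsPrime := by
  classical
  set φ : MvPolynomial σ R →ₐ[R] MvPolynomial σ R :=
    aeval (fun i => if i ∈ A then 0 else X i) with hφ
  have hspan : Ideal.span ((fun i => (X i : MvPolynomial σ R)) '' A) = RingHom.ker φ := by
    apply le_antisymm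
    · rw [Ideal.span_le]
      rintro _ ⟨i, hi, rfl⟩
      simp [RingHom.mem_ker, hφ, hi]
    · intro x hx
      rw [RingHom.mem_ker] at hx
      have key : ∀ y : MvPolynomial σ R,
          y - φ y ∈ Ideal.span ((fun i => (X i : MvPolynomial σ R)) '' A) := by
        intro y
        induction y using MvPolynomial.induction_on with
        | C a => simp [hφ]
        | add p q hp hq =>
          have := Ideal.add_mem _ hp hq
          simpa [add_sub_add_comm] using this
        | mul_X p i hp =>
          by_cases hi : i ∈ A
          · have hXi : (X i : MvPolynomial σ R) ∈
                Ideal.span ((fun i => (X i : MvPolynomial σ R)) '' A) :=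
              Ideal.subset_span ⟨i, hi, rfl⟩
            have : φ (p * X i) = 0 := by
              rw [map_mul]
              simp [hφ, hi]
            rw [this, sub_zero]
            exact Ideal.mul_mem_left _ _ hXi
          · have : φ (p * X i) = φ p * X i := by
              rw [map_mul]
              simp [hφ, hi]
            rw [this, ← sub_mul]
            exact Ideal.mul_mem_right _ _ hp
      have := key x
      rwa [hx, sub_zero] at this
  rw [hspan]
  exact RingHom.ker_isPrime φ

/-- Along a path on which `T` never changes across an edge, `T` is constant. -/
theorem T_const_of_no_jump {α β : Type*} (T : α → β) (c : ℕ → α) :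
    ∀ l : ℕ, (∀ k < l, T (c k) = T (c (k + 1))) → T (c 0) = T (c l) := by
  intro l
  induction l with
  | zero => intro _; rfl
  | succ m ih =>
    intro h
    have h0 := ih fun k hk => h k (Nat.lt_succ_of_lt hk)
    rw [h0]
    exact h m (Nat.lt_succ_self m)

/-- If `V` is cylindrically connected then for every output assignment `T` the
ideal `I = ⟨m(p,q) : T p ≠ T q⟩` is generated by a subset of the variables and
is in particular prime (so there is exactly one unsigned min-set). -/
theorem stmt10 {n : ℕ} {F : Type*} [Field F] [Fintype F] [DecidableEq F]
    (V : Finset (Fin n → F))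
    (hcc : ∀ C : Set (Fin n → F), IsCylinder C → PathConn (C ∩ (V : Set (Fin n → F))))
    (T : (Fin n → F) → F) :
    (∃ A : Set (Fin n),
      Ideal.span {m : MvPolynomial (Fin n) F | ∃ p ∈ V, ∃ q ∈ V, T p ≠ T q ∧ m = diffMon F p q}
        = Ideal.span ((fun i => (X i : MvPolynomial (Fin n) F)) '' A)) ∧
    (Ideal.span {m : MvPolynomial (Fin n) F |
        ∃ p ∈ V, ∃ q ∈ V, T p ≠ T q ∧ m = diffMon F p q}).IsPrime := by
  classical
  set A : Set (Fin n) :=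
    {i | ∃ p ∈ V, ∃ q ∈ V, T p ≠ T q ∧ hammingDist p q = 1 ∧ p i ≠ q i} with hA
  have hmain :
      Ideal.span {m : MvPolynomial (Fin n) F | ∃ p ∈ V, ∃ q ∈ V, T p ≠ T q ∧ m = diffMon F p q}
        = Ideal.span ((fun i => (X i : MvPolynomial (Fin n) F)) '' A) := by
    apply le_antisymm
    · rw [Ideal.span_le]
      rintro _ ⟨p, hp, q, hq, hT, rfl⟩
      -- use the cylinder of p and q
      set C : Set (Fin n → F) := {s | ∀ j, p j = q j → s j = p j} with hC
      have hcyl : IsCylinder C := by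
        refine ⟨{j | p j = q j}, p, ?_⟩
        ext s; simp [hC]
      have hpC : p ∈ C ∩ (V : Set (Fin n → F)) := ⟨fun j _ => rfl, hp⟩
      have hqC : q ∈ C ∩ (V : Set (Fin n → F)) := ⟨fun j hj => hj.symm, hq⟩
      obtain ⟨l, c, hc0, hcl, hmem, hdist⟩ := hcc C hcyl p hpC q hqC
      -- find a jump
      have hjump : ∃ k < l, T (c k) ≠ T (c (k + 1)) := by
        by_contra h
        push_neg at h
        exact hT (by rw [← hc0, ← hcl]; exact T_const_of_no_jump T c l h)
      obtain ⟨k, hkl, hTk⟩ := hjump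
      have hk1 := hdist k hkl
      -- the edge differs at exactly one coordinate i
      have hne : c k ≠ c (k + 1) := by
        intro h; rw [h] at hk1; simp [hammingDist] at hk1
      obtain ⟨i, hi⟩ := Function.ne_iff.mp hne
      have hiA : i ∈ A := ⟨c k, (hmem k hkl.le).2, c (k + 1), (hmem (k + 1) hkl).2, hTk, hk1, hi⟩
      -- i is a coordinate where p and q differ
      have hipq : p i ≠ q i := by
        intro hipq
        have h1 := (hmem k hkl.le).1 i hipq
        have h2 := (hmem (k + 1) hkl).1 i hipq
        exact hi (h1.trans h2.symm)
      have hifilter : i ∈ Finset.univ.filter (fun j => p j ≠ q j) := by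
        simp [hipq]
      rw [diffMon, ← Finset.mul_prod_erase _ _ hifilter]
      exact Ideal.mul_mem_right _ _ (Ideal.subset_span ⟨i, hiA, rfl⟩)
    · rw [Ideal.span_le]
      rintro _ ⟨i, ⟨p, hp, q, hq, hT, hdist, hpqi⟩, rfl⟩
      apply Ideal.subset_span
      refine ⟨p, hp, q, hq, hT, ?_⟩
      have hfilter : Finset.univ.filter (fun j => p j ≠ q j) = {i} := by
        apply Finset.eq_singleton_iff_unique_mem.mpr
        constructor
        · simp [hpqi]
        · intro j hj
          by_contra hji
          have : 2 ≤ (Finset.univ.filter (fun j => p j ≠ q j)).card := by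
            apply Finset.one_lt_card.mpr
            exact ⟨i, by simp [hpqi], j, hj, fun h => hji h.symm⟩
          rw [show (Finset.univ.filter (fun j => p j ≠ q j)).card = hammingDist p q from rfl,
            hdist] at this
          omega
      rw [diffMon, hfilter, Finset.prod_singleton]
  exact ⟨⟨A, hmain⟩, hmain ▸ span_X_image_isPrime A⟩
end

section
/- Let V ⊆ F^n be a finite input set such that for every output assignment T: V → F the ideal I = ⟨m(p,q) : T(p) ≠ T(q)⟩ is prime (equivalently, has a unique unsigned min-set). Then for every cylinder C and every connected set S ⊊ C ∩ V, there exists a point r ∈ (C ∩ V) \ S such that S ∪ {r} is connected. -/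
open MvPolynomial

lemma prod_X_eq_monomial_sum {n : ℕ} {R : Type*} [CommRing R] (A : Finset (Fin n)) :
    (∏ i ∈ A, (X i : MvPolynomial (Fin n) R)) =
      monomial (∑ i ∈ A, Finsupp.single i 1) 1 := by
  classical
  induction A using Finset.induction with
  | empty => simp
  | insert a s h ih =>
      rw [Finset.prod_insert h, Finset.sum_insert h, ih, X, monomial_mul, one_mul]

lemma sum_single_apply {n : ℕ} (A : Finset (Fin n)) (j : Fin n) :
    (∑ i ∈ A, Finsupp.single i (1 : ℕ)) j = if j ∈ A then 1 else 0 := by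
  classical
  rw [Finsupp.finset_sum_apply]
  simp [Finsupp.single_apply]

lemma pathconn_union {n : ℕ} {F : Type*} [DecidableEq F] {S : Set (Fin n → F)}
    (hS : PathConn S) {s r : Fin n → F} (hs : s ∈ S) (hd : hammingDist s r = 1) :
    PathConn (S ∪ {r}) := by
  intro p hp q hq
  rcases hp with hp | hp
  · rcases hq with hq | hq
    · obtain ⟨l, c, h0, hl, hmem, hdist⟩ := hS p hp q hq
      exact ⟨l, c, h0, hl, fun k hk => Or.inl (hmem k hk), hdist⟩
    · -- q = r
      obtain ⟨l, c, h0, hl, hmem, hdist⟩ := hS p hp s hs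
      refine ⟨l + 1, fun k => if k ≤ l then c k else r, by simp [h0], ?_, ?_, ?_⟩
      · simp [Nat.not_succ_le_self, hq.symm]
      · intro k hk
        by_cases h : k ≤ l
        · show (if k ≤ l then c k else r) ∈ S ∪ {r}
          rw [if_pos h]; exact Or.inl (hmem k h)
        · show (if k ≤ l then c k else r) ∈ S ∪ {r}
          rw [if_neg h]; exact Or.inr rfl
      · intro k hk
        by_cases h : k < l
        · have h1 : k ≤ l := h.le
          have h2 : k + 1 ≤ l := h
          simpa [h1, h2] using hdist k h
        · have hkl : k = l := by omega
          subst hkl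
          simpa [Nat.not_succ_le_self, hl] using hd
  · -- p = r
    rcases hq with hq | hq
    · obtain ⟨l, c, h0, hl, hmem, hdist⟩ := hS s hs q hq
      refine ⟨l + 1, fun k => if k = 0 then r else c (k - 1), by simp [hp.symm], ?_, ?_, ?_⟩
      · simp [hl]
      · intro k hk
        by_cases h : k = 0
        · show (if k = 0 then r else c (k-1)) ∈ S ∪ {r}
          rw [if_pos h]; exact Or.inr rfl
        · have : k - 1 ≤ l := by omega
          show (if k = 0 then r else c (k-1)) ∈ S ∪ {r}
          rw [if_neg h]; exact Or.inl (hmem _ this)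
      · intro k hk
        by_cases h : k = 0
        · subst h
          simpa [h0, hammingDist_comm r s] using hd
        · have h1 : k + 1 ≠ 0 := by omega
          have h2 : k - 1 + 1 = k := by omega
          have h3 : k - 1 < l := by omega
          have := hdist (k - 1) h3
          rw [h2] at this
          simpa [h, h1] using this
    · refine ⟨0, fun _ => r, hp.symm ▸ rfl, hq.symm ▸ rfl, ?_, ?_⟩
      · intro k hk; exact Or.inr rfl
      · intro k hk; omega

/-- If for every output assignment `T` the ideal `⟨m(p,q) : T p ≠ T q⟩` is
prime, then for every cylinder `C` and every connected proper subset
`S ⊊ C ∩ V` there is a point `r ∈ (C ∩ V) \ S` with `S ∪ {r}` connected. -/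
theorem stmt11 {n : ℕ} {F : Type*} [Field F] [Fintype F] [DecidableEq F]
    (V : Finset (Fin n → F))
    (hprime : ∀ T : (Fin n → F) → F,
      (Ideal.span {m : MvPolynomial (Fin n) F |
        ∃ p ∈ V, ∃ q ∈ V, T p ≠ T q ∧ m = diffMon F p q}).IsPrime)
    (C : Set (Fin n → F)) (hC : IsCylinder C) (S : Set (Fin n → F))
    (hS : PathConn S) (hSsub : S ⊂ C ∩ (V : Set (Fin n → F))) :
    ∃ r ∈ (C ∩ (V : Set (Fin n → F))) \ S, PathConn (S ∪ {r}) := by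
  classical
  obtain ⟨q0, hq0CV, hq0S⟩ := Set.exists_of_ssubset hSsub
  rcases Set.eq_empty_or_nonempty S with hSe | ⟨p0, hp0⟩
  · refine ⟨q0, ⟨hq0CV, hq0S⟩, ?_⟩
    subst hSe
    intro p hp q hq
    simp only [Set.empty_union, Set.mem_singleton_iff] at hp hq
    exact ⟨0, fun _ => q0, hp.symm, hq.symm, fun k _ => Or.inr rfl, fun k hk => by omega⟩
  · have hp0C : p0 ∈ C := (hSsub.subset hp0).1
    have hp0V : p0 ∈ V := (hSsub.subset hp0).2
    set T : (Fin n → F) → F := fun s => if s ∈ S then 0 else 1 with hT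
    have hI := hprime T
    have hTS : ∀ {a}, a ∈ S → T a = 0 := fun {a} ha => if_pos ha
    have hTnS : ∀ {a}, a ∉ S → T a = 1 := fun {a} ha => if_neg ha
    have hgen : diffMon F p0 q0 ∈ Ideal.span {m : MvPolynomial (Fin n) F |
        ∃ p ∈ V, ∃ q ∈ V, T p ≠ T q ∧ m = diffMon F p q} :=
      Ideal.subset_span ⟨p0, hp0V, q0, hq0CV.2, by
        rw [hTS hp0, hTnS hq0S]; exact zero_ne_one, rfl⟩
    rw [diffMon] at hgen
    obtain ⟨i, hiD, hXi⟩ := (Ideal.IsPrime.prod_mem_iff (hp := hI)).mp hgen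
    obtain ⟨N, u, hCdef⟩ := hC
    have hiN : i ∉ N := by
      intro h
      have h1 : p0 i = u i := by rw [hCdef] at hp0C; exact hp0C i h
      have h2 : q0 i = u i := by have := hq0CV.1; rw [hCdef] at this; exact this i h
      exact (Finset.mem_filter.mp hiD).2 (h1.trans h2.symm)
    -- rewrite the generating set as a monomial image
    set E : Set ((Fin n) →₀ ℕ) := {d | ∃ p ∈ V, ∃ q ∈ V, T p ≠ T q ∧
      d = ∑ j ∈ Finset.univ.filter (fun j => p j ≠ q j), Finsupp.single j 1} with hE
    have hset : {m : MvPolynomial (Fin n) F |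
        ∃ p ∈ V, ∃ q ∈ V, T p ≠ T q ∧ m = diffMon F p q} =
        (fun d => monomial d (1 : F)) '' E := by
      ext m
      constructor
      · rintro ⟨p, hp, q, hq, hTpq, rfl⟩
        exact ⟨_, ⟨p, hp, q, hq, hTpq, rfl⟩, (prod_X_eq_monomial_sum _).symm⟩
      · rintro ⟨d, ⟨p, hp, q, hq, hTpq, rfl⟩, rfl⟩
        exact ⟨p, hp, q, hq, hTpq, (prod_X_eq_monomial_sum _).symm⟩
    rw [hset] at hXi
    have hsup : Finsupp.single i 1 ∈ (X i : MvPolynomial (Fin n) F).support := by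
      rw [support_X]; exact Finset.mem_singleton_self _
    obtain ⟨d, ⟨s, hsV, t, htV, hTst, hdeq⟩, hle⟩ :=
      mem_ideal_span_monomial_image.mp hXi _ hsup
    -- the difference set of s and t is exactly {i}
    have hst : s ≠ t := fun h => hTst (by rw [h])
    have hDsub : (Finset.univ.filter (fun j => s j ≠ t j)) ⊆ {i} := by
      intro j hj
      have hdj : d j = 1 := by
        rw [hdeq, sum_single_apply]; simp [hj]
      have hlej := hle j
      rw [hdj, Finsupp.single_apply] at hlej
      by_contra hji
      simp only [Finset.mem_singleton] at hji
      rw [if_neg (fun h => hji h.symm)] at hlej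
      omega
    have hDne : (Finset.univ.filter (fun j => s j ≠ t j)).Nonempty := by
      obtain ⟨j, hj⟩ := Function.ne_iff.mp hst
      exact ⟨j, Finset.mem_filter.mpr ⟨Finset.mem_univ _, hj⟩⟩
    have hDeq : (Finset.univ.filter (fun j => s j ≠ t j)) = {i} := by
      rcases Finset.subset_singleton_iff.mp hDsub with h | h
      · exact absurd h (Finset.nonempty_iff_ne_empty.mp hDne)
      · exact h
    -- key step: given a ∈ S, b ∉ S with difference set {i}, b works
    have key : ∀ a b : Fin n → F, a ∈ S → b ∉ S → b ∈ V →
        (Finset.univ.filter (fun j => a j ≠ b j)) = {i} →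
        ∃ r ∈ (C ∩ (V : Set (Fin n → F))) \ S, PathConn (S ∪ {r}) := by
      intro a b haS hbS hbV hab
      have haC : a ∈ C := (hSsub.subset haS).1
      have hbC : b ∈ C := by
        rw [hCdef]
        intro j hj
        have hji : j ≠ i := fun h => hiN (h ▸ hj)
        have : a j = b j := by
          by_contra hne
          have : j ∈ ({i} : Finset (Fin n)) := hab ▸ Finset.mem_filter.mpr
            ⟨Finset.mem_univ _, hne⟩
          exact hji (Finset.mem_singleton.mp this)
        rw [hCdef] at haC
        rw [← this]; exact haC j hj
      have hdist : hammingDist a b = 1 := by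
        rw [hammingDist]
        rw [show ({j | a j ≠ b j} : Finset (Fin n)) =
          Finset.univ.filter (fun j => a j ≠ b j) from rfl, hab]
        simp
      exact ⟨b, ⟨⟨hbC, hbV⟩, hbS⟩, pathconn_union hS haS hdist⟩
    by_cases hsS : s ∈ S
    · have htS : t ∉ S := fun h => hTst (by rw [hTS hsS, hTS h])
      exact key s t hsS htS htV hDeq
    · have htS : t ∈ S := by
        by_contra h
        exact hTst (by rw [hTnS hsS, hTnS h])
      have : (Finset.univ.filter (fun j => t j ≠ s j)) = {i} := by
        rw [← hDeq]; apply Finset.filter_congr; intro j _; simp [ne_comm]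
      exact key t s htS hsS hsV this
end

section
/- Let V ⊆ {0,1}^n be a Boolean input set with a point p that differs from every other point of V in at least l coordinates (a diagonal of length l). Then there is an output assignment T: V → {0,1} such that the pseudomonomial ideal I^{sgn} = ⟨m^{sgn}(s_i,s_j) : T(s_i) < T(s_j)⟩ has at least l primary components; equivalently, there are at least l signed min-sets. -/
open MvPolynomial

/-- The pseudomonomial `m^{sgn}(s,s') = ∏_{s_k ≠ s'_k} (x_k - sign(s'_k - s_k))`
for Boolean points `s, s'` (coefficients in `ℚ`): the factor is `x_k - 1` when
`s_k` increases to `s'_k` and `x_k + 1` when it decreases. -/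
noncomputable def msgn {n : ℕ} (s s' : Fin n → Bool) : MvPolynomial (Fin n) ℚ :=
  ∏ k ∈ Finset.univ.filter (fun k => s k ≠ s' k),
    (X k - if s' k then 1 else -1)

lemma X_ne_C_aux {n : ℕ} (j : Fin n) (r : ℚ) : (X j : MvPolynomial (Fin n) ℚ) ≠ C r := by
  intro h
  have h1 := congrArg (coeff (Finsupp.single j 1)) h
  rw [coeff_X, coeff_C] at h1
  simp [eq_comm, Finsupp.single_eq_zero] at h1

/-- If a Boolean input set `V` (with at least two points) has a diagonal of
length `l` at `p`, then there is an output assignment `T` such that the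
pseudomonomial ideal `I^{sgn} = ⟨m^{sgn}(s,s') : T s < T s'⟩` has at least `l`
minimal primes (equivalently, at least `l` signed min-sets). -/
theorem stmt13 {n : ℕ} (V : Finset (Fin n → Bool)) (p : Fin n → Bool) (hp : p ∈ V)
    (hV : ∃ q ∈ V, q ≠ p) (l : ℕ)
    (hdiag : ∀ q ∈ V, q ≠ p → l ≤ hammingDist p q) :
    ∃ T : (Fin n → Bool) → Bool,
      l ≤ (Ideal.minimalPrimes (Ideal.span
        {m : MvPolynomial (Fin n) ℚ |
          ∃ s ∈ V, ∃ s' ∈ V, T s < T s' ∧ m = msgn s s'})).ncard := by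
  classical
  obtain ⟨q0, hq0, hq0p⟩ := hV
  set W := V.filter (fun s => s ≠ p) with hWdef
  have hW : W.Nonempty := ⟨q0, Finset.mem_filter.mpr ⟨hq0, hq0p⟩⟩
  obtain ⟨s0, hs0W, hmin⟩ := W.exists_min_image (fun s => hammingDist p s) hW
  obtain ⟨hs0V, hs0p⟩ := Finset.mem_filter.mp hs0W
  refine ⟨fun s => decide (s ≠ p), ?_⟩
  set G : Set (MvPolynomial (Fin n) ℚ) :=
    {m : MvPolynomial (Fin n) ℚ |
      ∃ s ∈ V, ∃ s' ∈ V, (decide (s ≠ p)) < (decide (s' ≠ p)) ∧ m = msgn s s'} with hGdef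
  set I : Ideal (MvPolynomial (Fin n) ℚ) := Ideal.span G with hIdef
  -- members of G come from pairs (p, s') with s' ≠ p
  have hGmem : ∀ m ∈ G, ∃ s' ∈ V, s' ≠ p ∧ m = msgn p s' := by
    rintro m ⟨s, hs, s', hs', hlt, rfl⟩
    rw [Bool.lt_iff] at hlt
    have hsp : s = p := by
      have := hlt.1; simpa using this
    have hs'p : s' ≠ p := by
      have := hlt.2; simpa using this
    exact ⟨s', hs', hs'p, by rw [hsp]⟩
  -- the difference set of p and s0
  set D₀ : Finset (Fin n) := Finset.univ.filter (fun j => p j ≠ s0 j) with hD₀def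
  have hD₀card : hammingDist p s0 = D₀.card := rfl
  -- the common root of all factors
  set a : Fin n → ℚ := fun j => if p j then -1 else 1 with hadef
  -- factors of generators are X j - C (a j)
  have hfac : ∀ s' : Fin n → Bool, ∀ j : Fin n, p j ≠ s' j →
      ((if s' j then 1 else -1 : MvPolynomial (Fin n) ℚ)) = C (a j) := by
    intro s' j hj
    cases hpj : p j <;> cases hsj : s' j <;>
      simp [hpj, hsj, hadef] at hj ⊢
  have hmsgn : ∀ s' : Fin n → Bool,
      msgn p s' = ∏ j ∈ Finset.univ.filter (fun j => p j ≠ s' j), (X j - C (a j)) := by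
    intro s'
    refine Finset.prod_congr rfl fun j hj => ?_
    rw [hfac s' j (Finset.mem_filter.mp hj).2]
  -- minimality of card D₀
  have hmincard : ∀ s' ∈ V, s' ≠ p →
      D₀.card ≤ (Finset.univ.filter (fun j => p j ≠ s' j)).card := by
    intro s' hs' hs'p
    have := hmin s' (Finset.mem_filter.mpr ⟨hs', hs'p⟩)
    exact this
  -- key construction: for each k ∈ D₀ a minimal prime containing X k - C (a k)
  -- but no other X j - C (a j) for j ∈ D₀
  have key : ∀ k : Fin n, ∃ P : Ideal (MvPolynomial (Fin n) ℚ), k ∈ D₀ →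
      P ∈ I.minimalPrimes ∧ ∀ j ∈ D₀, (X j - C (a j) ∈ P ↔ j = k) := by
    intro k
    by_cases hk : k ∈ D₀
    swap
    · exact ⟨⊥, fun h => absurd h hk⟩
    -- the auxiliary prime Q
    set g : Fin n → MvPolynomial (Fin n) ℚ :=
      fun j => if j = k ∨ j ∉ D₀ then C (a j) else X j with hgdef
    set φ : MvPolynomial (Fin n) ℚ →ₐ[ℚ] MvPolynomial (Fin n) ℚ := aeval g with hφdef
    set Q : Ideal (MvPolynomial (Fin n) ℚ) := RingHom.ker φ with hQdef
    have hQprime : Q.IsPrime := RingHom.ker_isPrime φ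
    have hQfac : ∀ j : Fin n, (j = k ∨ j ∉ D₀) → X j - C (a j) ∈ Q := by
      intro j hj
      simp only [hQdef, RingHom.mem_ker, map_sub, hφdef, aeval_X, aeval_C]
      simp [hgdef, hj, algebraMap_eq]
    have hQnotfac : ∀ j ∈ D₀, j ≠ k → X j - C (a j) ∉ Q := by
      intro j hjD hjk h
      simp only [hQdef, RingHom.mem_ker, map_sub, hφdef, aeval_X, aeval_C] at h
      have hcond : ¬(j = k ∨ j ∉ D₀) := by
        push_neg; exact ⟨hjk, hjD⟩
      rw [hgdef] at h
      simp only [hcond, if_false, algebraMap_eq] at h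
      exact X_ne_C_aux j (a j) (sub_eq_zero.mp h)
    -- I ≤ Q
    have hIQ : I ≤ Q := by
      rw [hIdef, Ideal.span_le]
      intro m hm
      obtain ⟨s', hs', hs'p, rfl⟩ := hGmem m hm
      rw [hmsgn s']
      set D' := Finset.univ.filter (fun j => p j ≠ s' j) with hD'def
      have : ∃ j ∈ D', (j = k ∨ j ∉ D₀) := by
        by_contra hcon
        push_neg at hcon
        have hsub : D' ⊆ D₀.erase k := by
          intro j hj
          obtain ⟨h1, h2⟩ := hcon j hj
          exact Finset.mem_erase.mpr ⟨h1, h2⟩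
        have h1 : D'.card ≤ (D₀.erase k).card := Finset.card_le_card hsub
        have h2 : (D₀.erase k).card < D₀.card :=
          Finset.card_erase_lt_of_mem hk
        have h3 : D₀.card ≤ D'.card := hmincard s' hs' hs'p
        omega
      obtain ⟨j, hjD', hj⟩ := this
      rw [← Finset.mul_prod_erase D' _ hjD']
      exact Ideal.mul_mem_right _ _ (hQfac j hj)
    -- get a minimal prime below Q
    obtain ⟨P, hPmin, hPQ⟩ := Ideal.exists_minimalPrimes_le hIQ
    refine ⟨P, fun _ => ⟨hPmin, ?_⟩⟩
    have hPprime : P.IsPrime := hPmin.1.1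
    have hIP : I ≤ P := hPmin.1.2
    -- the generator msgn p s0 is in P
    have hgen : msgn p s0 ∈ P := by
      apply hIP
      apply Ideal.subset_span
      refine ⟨p, hp, s0, hs0V, ?_, rfl⟩
      rw [Bool.lt_iff]
      constructor <;> simp [hs0p]
    rw [hmsgn s0] at hgen
    have := (Ideal.IsPrime.prod_mem_iff (hp := hPprime)).mp hgen
    obtain ⟨j, hjD, hjP⟩ := this
    have hjk : j = k := by
      by_contra hne
      exact hQnotfac j hjD hne (hPQ hjP)
    subst hjk
    intro i hiD
    constructor
    · intro hiP
      by_contra hne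
      exact hQnotfac i hiD hne (hPQ hiP)
    · rintro rfl; exact hjP
  choose P hP using key
  have hfin : I.minimalPrimes.Finite := by
    rw [Ideal.minimalPrimes_eq_comap]
    exact (minimalPrimes.finite_of_isNoetherianRing _).image _
  have hinj : Set.InjOn P ↑D₀ := by
    intro k hk k' hk' hPP
    by_contra hne
    have h1 := ((hP k hk).2 k hk).mpr rfl
    have h2 := ((hP k' hk').2 k hk).mp (hPP ▸ h1)
    exact hne h2
  have hsub : ↑(D₀.image P) ⊆ I.minimalPrimes := by
    intro x hx
    rw [Finset.coe_image] at hx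
    obtain ⟨k, hk, rfl⟩ := hx
    exact (hP k hk).1
  calc l ≤ hammingDist p s0 := hdiag s0 hs0V hs0p
    _ = D₀.card := hD₀card
    _ = (D₀.image P).card := (Finset.card_image_of_injOn hinj).symm
    _ = (↑(D₀.image P) : Set (Ideal (MvPolynomial (Fin n) ℚ))).ncard :=
        (Set.ncard_coe_finset _).symm
    _ ≤ I.minimalPrimes.ncard := Set.ncard_le_ncard hsub hfin
end

section
/- Let V ⊆ {0,1}^n be a Boolean input set that is cylindrically connected. Then for every output assignment T: V → {0,1}, every generator of the pseudomonomial ideal I^{sgn} = ⟨m^{sgn}(p,q) : T(p) < T(q)⟩ is divisible by a univariate generator m^{sgn}(s,r) with Hamming distance d(s,r) = 1; consequently I^{sgn} has at most one minimal prime over it and the data set has at most one signed min-set. -/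
open MvPolynomial

-- flip lemma
lemma flip_step (f : ℕ → Bool) : ∀ l, f 0 = false → f l = true →
    ∃ k < l, f k = false ∧ f (k+1) = true := by
  intro l
  induction l with
  | zero => intro h0 hl; simp [h0] at hl
  | succ l ih =>
    intro h0 hl
    by_cases h : f l = true
    · obtain ⟨k, hk, hk1, hk2⟩ := ih h0 h
      exact ⟨k, Nat.lt_succ_of_lt hk, hk1, hk2⟩
    · exact ⟨l, Nat.lt_succ_self l, by simpa using h, hl⟩

lemma bool_aux {a b c : Bool} (h1 : a ≠ b) (h2 : c ≠ b) : c = a := by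
  revert h1 h2; cases a <;> cases b <;> cases c <;> decide

lemma key_lemma {n : ℕ} (V : Finset (Fin n → Bool))
    (hcc : ∀ C : Set (Fin n → Bool), IsCylinder C → PathConn (C ∩ (V : Set (Fin n → Bool))))
    (T : (Fin n → Bool) → Bool) :
    ∀ N : ℕ, ∀ p ∈ V, ∀ q ∈ V, T p < T q → hammingDist p q = N →
      ∃ s ∈ V, ∃ r ∈ V, T s < T r ∧ hammingDist s r = 1 ∧ msgn s r ∣ msgn p q := by
  intro N
  induction N using Nat.strong_induction_on with
  | _ N ih =>
    intro p hpV q hqV hT hN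
    obtain ⟨hTp, hTq⟩ := Bool.lt_iff.mp hT
    set C : Set (Fin n → Bool) := {s | ∀ i ∈ {i | p i = q i}, s i = p i} with hC
    have hcyl : IsCylinder C := ⟨{i | p i = q i}, p, rfl⟩
    have hpC : p ∈ C := fun i _ => rfl
    have hqC : q ∈ C := fun i hi => hi.symm
    obtain ⟨l, c, hc0, hcl, hmem, hstep⟩ :=
      hcc C hcyl p ⟨hpC, hpV⟩ q ⟨hqC, hqV⟩
    obtain ⟨k, hkl, hfk, hfk1⟩ := flip_step (fun k => T (c k)) l
      (by simp [hc0, hTp]) (by simp [hcl, hTq])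
    set s := c k with hs
    set r := c (k+1) with hr
    have hsC : s ∈ C ∩ (V : Set _) := hmem k hkl.le
    have hrC : r ∈ C ∩ (V : Set _) := hmem (k+1) hkl
    have hd : hammingDist s r = 1 := hstep k hkl
    obtain ⟨j, hj⟩ := Finset.card_eq_one.mp hd
    have hsj : s j ≠ r j := by
      have : j ∈ ({i | s i ≠ r i} : Finset (Fin n)) := by rw [hj]; exact Finset.mem_singleton_self j
      simpa using this
    have hother : ∀ i, i ≠ j → s i = r i := by
      intro i hi
      by_contra hne
      have : i ∈ ({i | s i ≠ r i} : Finset (Fin n)) := by simpa using hne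
      rw [hj] at this
      exact hi (Finset.mem_singleton.mp this)
    have hpqj : p j ≠ q j := by
      intro hpq
      exact hsj ((hsC.1 j hpq).trans (hrC.1 j hpq).symm)
    have hmsr : msgn s r = X j - if r j then 1 else -1 := by
      unfold msgn
      rw [show Finset.univ.filter (fun k => s k ≠ r k) = {j} from hj]
      simp
    by_cases hrq : r j = q j
    · refine ⟨s, hsC.2, r, hrC.2, Bool.lt_iff.mpr ⟨hfk, hfk1⟩, hd, ?_⟩
      rw [hmsr, hrq]
      unfold msgn
      exact Finset.dvd_prod_of_mem _ (by simpa using hpqj)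
    · -- r j = p j; recurse on (p, r)
      have hrp : r j = p j := bool_aux hpqj hrq
      have hTr : T p < T r := Bool.lt_iff.mpr ⟨hTp, hfk1⟩
      have hsub : (Finset.univ.filter (fun i => p i ≠ r i)) ⊆ (Finset.univ.filter (fun i => p i ≠ q i)) := by
        intro i hi
        simp only [Finset.mem_filter, Finset.mem_univ, true_and] at hi ⊢
        intro hpq
        exact hi ((hrC.1 i hpq).symm)
      have hjnot : j ∉ (Finset.univ.filter (fun i => p i ≠ r i)) := by
        simp [hrp]
      have hjin : j ∈ (Finset.univ.filter (fun i => p i ≠ q i)) := by simpa using hpqj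
      have hlt : hammingDist p r < N := by
        rw [← hN]
        exact Finset.card_lt_card (Finset.ssubset_iff_of_subset hsub |>.mpr ⟨j, hjin, hjnot⟩)
      obtain ⟨s', hs', r', hr', hT', hd', hdvd'⟩ :=
        ih _ hlt p hpV r hrC.2 hTr rfl
      refine ⟨s', hs', r', hr', hT', hd', hdvd'.trans ?_⟩
      -- msgn p r ∣ msgn p q
      unfold msgn
      have heq : ∀ i ∈ Finset.univ.filter (fun i => p i ≠ r i),
          (X i - if r i then 1 else -1 : MvPolynomial (Fin n) ℚ)
          = X i - if q i then 1 else -1 := by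
        intro i hi
        simp only [Finset.mem_filter, Finset.mem_univ, true_and] at hi
        have hpq : p i ≠ q i := fun h => hi (hrC.1 i h).symm
        have : r i = q i := by
          revert hi hpq; cases p i <;> cases q i <;> cases r i <;> decide
        rw [this]
      rw [Finset.prod_congr rfl heq]
      exact Finset.prod_dvd_prod_of_subset _ _ _ hsub

/-- If a Boolean input set `V` is cylindrically connected, then for every
output assignment `T` every generator `m^{sgn}(p,q)` of
`I^{sgn} = ⟨m^{sgn}(p,q) : T p < T q⟩` is divisible by a univariate generator
`m^{sgn}(s,r)` with `d(s,r) = 1`; consequently `I^{sgn}` has at most one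
minimal prime, i.e., at most one signed min-set. -/
theorem stmt14 {n : ℕ} (V : Finset (Fin n → Bool))
    (hcc : ∀ C : Set (Fin n → Bool), IsCylinder C → PathConn (C ∩ (V : Set (Fin n → Bool))))
    (T : (Fin n → Bool) → Bool) :
    (∀ p ∈ V, ∀ q ∈ V, T p < T q →
      ∃ s ∈ V, ∃ r ∈ V, T s < T r ∧ hammingDist s r = 1 ∧ msgn s r ∣ msgn p q) ∧
    (Ideal.minimalPrimes (Ideal.span
      {m : MvPolynomial (Fin n) ℚ |
        ∃ p ∈ V, ∃ q ∈ V, T p < T q ∧ m = msgn p q})).Subsingleton := by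
  classical
  have part1 : ∀ p ∈ V, ∀ q ∈ V, T p < T q →
      ∃ s ∈ V, ∃ r ∈ V, T s < T r ∧ hammingDist s r = 1 ∧ msgn s r ∣ msgn p q :=
    fun p hp q hq hT => key_lemma V hcc T _ p hp q hq hT rfl
  refine ⟨part1, ?_⟩
  set G : Set (MvPolynomial (Fin n) ℚ) :=
    {m : MvPolynomial (Fin n) ℚ | ∃ p ∈ V, ∃ q ∈ V, T p < T q ∧ m = msgn p q} with hG
  set I := Ideal.span G with hI
  have hGlin : ∀ m ∈ G, ∃ (j : Fin n) (cst : ℚ),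
      (X j - MvPolynomial.C cst) ∈ G ∧ (X j - MvPolynomial.C cst) ∣ m := by
    rintro m ⟨p, hp, q, hq, hT, rfl⟩
    obtain ⟨s, hs, r, hr, hT', hd, hdvd⟩ := part1 p hp q hq hT
    obtain ⟨j, hj⟩ := Finset.card_eq_one.mp hd
    have hmsr : msgn s r = X j - MvPolynomial.C (if r j then (1:ℚ) else -1) := by
      unfold msgn
      rw [show Finset.univ.filter (fun k => s k ≠ r k) = {j} from hj]
      cases hrj : r j <;> simp [hrj]
    exact ⟨j, _, by rw [← hmsr]; exact ⟨s, hs, r, hr, hT', rfl⟩, by rw [← hmsr]; exact hdvd⟩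
  by_cases htop : I = ⊤
  · intro a ha b hb
    exfalso
    exact ha.1.1.ne_top (top_le_iff.mp (htop ▸ ha.1.2))
  · have huniq : ∀ (j : Fin n) (a b : ℚ),
        X j - MvPolynomial.C a ∈ I → X j - MvPolynomial.C b ∈ I → a = b := by
      intro j a b ha hb
      by_contra hne
      apply htop
      have hmem : (MvPolynomial.C (a - b) : MvPolynomial (Fin n) ℚ) ∈ I := by
        have hsub := I.sub_mem hb ha
        have h2 : (X j - MvPolynomial.C b) - (X j - MvPolynomial.C a)
            = MvPolynomial.C (a - b) := by rw [map_sub]; ring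
        rwa [h2] at hsub
      exact Ideal.eq_top_of_isUnit_mem _ hmem
        ((isUnit_iff_ne_zero.mpr (sub_ne_zero.mpr hne)).map
          (MvPolynomial.C : ℚ →+* MvPolynomial (Fin n) ℚ))
    set g : Fin n → MvPolynomial (Fin n) ℚ :=
      fun j => if h : ∃ cst : ℚ, X j - MvPolynomial.C cst ∈ I then MvPolynomial.C h.choose
               else X j with hg
    set φ : MvPolynomial (Fin n) ℚ →ₐ[ℚ] MvPolynomial (Fin n) ℚ := aeval g with hφ
    have hπ : (Ideal.Quotient.mkₐ ℚ I).comp φ = Ideal.Quotient.mkₐ ℚ I := by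
      apply MvPolynomial.algHom_ext
      intro j
      simp only [AlgHom.comp_apply, hφ, aeval_X, hg]
      split_ifs with h
      · have hspec := h.choose_spec
        have h0 : Ideal.Quotient.mk I (X j - MvPolynomial.C h.choose) = 0 :=
          Ideal.Quotient.eq_zero_iff_mem.mpr hspec
        rw [map_sub, sub_eq_zero] at h0
        have h1 : Ideal.Quotient.mkₐ ℚ I (MvPolynomial.C h.choose) = Ideal.Quotient.mkₐ ℚ I (X j) := by
          rw [Ideal.Quotient.mkₐ_eq_mk]; exact h0.symm
        simpa using h1
      · rfl
    have hker1 : I ≤ RingHom.ker φ.toRingHom := by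
      rw [hI, Ideal.span_le]
      intro m hm
      obtain ⟨j, cst, hmemG, t, rfl⟩ := hGlin m hm
      have hIlin : X j - MvPolynomial.C cst ∈ I := hI ▸ Ideal.subset_span hmemG
      have hex : ∃ c : ℚ, X j - MvPolynomial.C c ∈ I := ⟨cst, hIlin⟩
      have hzero : φ (X j - MvPolynomial.C cst) = 0 := by
        rw [map_sub, hφ, aeval_X, aeval_C, hg]
        simp only [dif_pos hex]
        rw [huniq j hex.choose cst hex.choose_spec hIlin]
        simp [MvPolynomial.algebraMap_eq]
      show _ ∈ RingHom.ker φ.toRingHom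
      rw [RingHom.mem_ker]
      show φ _ = 0
      rw [map_mul, hzero, zero_mul]
    have hker2 : RingHom.ker φ.toRingHom ≤ I := by
      intro f hf
      have h1 : Ideal.Quotient.mk I (φ f) = Ideal.Quotient.mk I f := by
        have := AlgHom.congr_fun hπ f
        simpa [Ideal.Quotient.mkₐ_eq_mk] using this
      rw [RingHom.mem_ker] at hf
      rw [← Ideal.Quotient.eq_zero_iff_mem, ← h1]
      show Ideal.Quotient.mk I (φ.toRingHom f) = 0
      rw [hf, map_zero]
    have hIker : I = RingHom.ker φ.toRingHom := le_antisymm hker1 hker2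
    have hprime : I.IsPrime := hIker ▸ RingHom.ker_isPrime _
    intro a ha b hb
    have key2 : ∀ x ∈ I.minimalPrimes, x = I := by
      intro x hx
      exact le_antisymm (hx.2 ⟨hprime, le_rfl⟩ hx.1.2) hx.1.2
    rw [key2 a ha, key2 b hb]
end

section
/- Let I^{ext} be a squarefree monomial ideal in F[x_1,...,x_n, y_1,...,y_n] with primary decomposition I^{ext} = P_1 ∩ ... ∩ P_l where each P_j is generated by a subset of the variables {x_i, y_i}. Let φ be the ring homomorphism sending y_i ↦ x_i and fixing x_i. Then the ideal generated by the φ-images of the generators of I^{ext} equals the intersection of the ideals generated by the φ-images of the generators of the P_j. -/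
open MvPolynomial

/-- The folding homomorphism `F[x_1,...,x_n,y_1,...,y_n] → F[x_1,...,x_n]`
sending `y_i ↦ x_i` and fixing each `x_i` (here `x_i = X (Sum.inl i)` and
`y_i = X (Sum.inr i)`). -/
noncomputable def fold (n : ℕ) (F : Type*) [Field F] :
    MvPolynomial (Fin n ⊕ Fin n) F →ₐ[F] MvPolynomial (Fin n) F :=
  aeval (Sum.elim X X)

/-- Let `I^{ext}` be a squarefree monomial ideal in `F[x,y]` whose monomial
generators (indexed by `G`) never involve both `x_i` and `y_i`, with a
decomposition `I^{ext} = P_1 ∩ ... ∩ P_l` where each `P_j` is generated by a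
subset `A j` of the variables. Then the ideal generated by the `φ`-images of
the generators of `I^{ext}` equals the intersection of the ideals generated by
the `φ`-images of the generators of the `P_j`. -/
theorem stmt19 {n : ℕ} {F : Type*} [Field F] (G : Set (Finset (Fin n ⊕ Fin n)))
    (hG : ∀ σ ∈ G, ∀ i : Fin n, ¬(Sum.inl i ∈ σ ∧ Sum.inr i ∈ σ))
    (l : ℕ) (A : Fin l → Set (Fin n ⊕ Fin n))
    (hdec : Ideal.span ((fun σ => ∏ i ∈ σ, (X i : MvPolynomial (Fin n ⊕ Fin n) F)) '' G)
      = ⨅ j : Fin l,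
          Ideal.span ((fun i => (X i : MvPolynomial (Fin n ⊕ Fin n) F)) '' A j)) :
    Ideal.span (fold n F ''
        ((fun σ => ∏ i ∈ σ, (X i : MvPolynomial (Fin n ⊕ Fin n) F)) '' G))
      = ⨅ j : Fin l,
          Ideal.span (fold n F ''
            ((fun i => (X i : MvPolynomial (Fin n ⊕ Fin n) F)) '' A j)) := by
  classical
  set π : Fin n ⊕ Fin n → Fin n := Sum.elim id id with hπ
  have hπl : ∀ a : Fin n, π (Sum.inl a) = a := fun a => rfl
  have hπr : ∀ a : Fin n, π (Sum.inr a) = a := fun a => rfl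
  -- coordinate formula for indicator sums
  have hind : ∀ {κ : Type} [DecidableEq κ] (σ : Finset (Fin n ⊕ Fin n)) (f : (Fin n ⊕ Fin n) → κ)
      (a : κ), (∑ i ∈ σ, Finsupp.single (f i) (1:ℕ)) a
        = (σ.filter (fun i => f i = a)).card := by
    intro κ _ σ f a
    rw [Finset.sum_apply']
    simp [Finsupp.single_apply, Finset.sum_boole]
  -- Step A: combinatorial content of hdec
  have stepA : ∀ e : (Fin n ⊕ Fin n) →₀ ℕ,
      (∃ σ ∈ G, (∑ i ∈ σ, Finsupp.single i 1) ≤ e) ↔ (∀ j, ∃ i ∈ A j, e i ≠ 0) := by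
    intro e
    have hset : (fun σ => ∏ i ∈ σ, (X i : MvPolynomial (Fin n ⊕ Fin n) F)) '' G
        = (fun s => monomial s (1:F)) '' ((fun σ : Finset (Fin n ⊕ Fin n) =>
            ∑ i ∈ σ, Finsupp.single i 1) '' G) := by
      rw [Set.image_image]
      exact Set.image_congr fun σ _ => (monomial_sum_one σ _).symm
    have hm := Ideal.ext_iff.mp hdec (monomial e (1:F))
    rw [hset, mem_ideal_span_monomial_image, Ideal.mem_iInf] at hm
    simp only [support_monomial, one_ne_zero, if_false, Finset.mem_singleton,
      forall_eq, Set.mem_image, exists_exists_and_eq_and] at hm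
    rw [hm]
    refine forall_congr' fun j => ?_
    rw [show ((fun i => (X i : MvPolynomial (Fin n ⊕ Fin n) F)) '' A j)
        = (X '' A j) from rfl, mem_ideal_span_X_image]
    simp [support_monomial]
  -- key pointwise claim
  have key : ∀ m : Fin n →₀ ℕ,
      (∃ σ ∈ G, (∑ i ∈ σ, Finsupp.single (π i) 1) ≤ m) ↔
        (∀ j, ∃ a ∈ π '' A j, m a ≠ 0) := by
    intro m
    constructor
    · rintro ⟨σ, hσG, hle⟩ j
      obtain ⟨i, hiA, hine⟩ := (stepA (∑ i ∈ σ, Finsupp.single i 1)).mp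
        ⟨σ, hσG, le_refl _⟩ j
      rw [hind σ (fun x => x) i] at hine
      have hiσ : i ∈ σ := by
        by_contra h
        apply hine
        rw [Finset.card_eq_zero, Finset.filter_eq_empty_iff]
        rintro x hx rfl; exact h hx
      refine ⟨π i, ⟨i, hiA, rfl⟩, ?_⟩
      have h1 : 1 ≤ (∑ i' ∈ σ, Finsupp.single (π i') (1:ℕ)) (π i) := by
        rw [hind σ π (π i), Nat.one_le_iff_ne_zero, ← Nat.pos_iff_ne_zero,
          Finset.card_pos]
        exact ⟨i, Finset.mem_filter.mpr ⟨hiσ, rfl⟩⟩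
      exact Nat.pos_iff_ne_zero.mp (lt_of_lt_of_le h1 (hle (π i)))
    · intro h
      set e : (Fin n ⊕ Fin n) →₀ ℕ := Finsupp.equivFunOnFinite.symm (fun i => m (π i))
        with he
      have hee : ∀ i, e i = m (π i) := fun i => rfl
      obtain ⟨σ, hσG, hle⟩ := (stepA e).mpr (by
        intro j
        obtain ⟨a, ⟨i, hiA, rfl⟩, hma⟩ := h j
        exact ⟨i, hiA, by rw [hee]; exact hma⟩)
      refine ⟨σ, hσG, fun a => ?_⟩
      rw [hind σ π a]
      by_cases h0 : (σ.filter (fun i => π i = a)).card = 0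
      · omega
      · obtain ⟨i, hi⟩ := Finset.card_pos.mp (Nat.pos_of_ne_zero h0)
        obtain ⟨hiσ, hπi⟩ := Finset.mem_filter.mp hi
        have hcard : (σ.filter (fun i => π i = a)).card ≤ 1 := by
          rw [Finset.card_le_one]
          intro x hx y hy
          obtain ⟨hxσ, hxa⟩ := Finset.mem_filter.mp hx
          obtain ⟨hyσ, hya⟩ := Finset.mem_filter.mp hy
          have hx' : x = Sum.inl a ∨ x = Sum.inr a := by
            cases x with
            | inl b => left; rw [show π (Sum.inl b) = b from rfl] at hxa; rw [hxa]
            | inr b => right; rw [show π (Sum.inr b) = b from rfl] at hxa; rw [hxa]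
          have hy' : y = Sum.inl a ∨ y = Sum.inr a := by
            cases y with
            | inl b => left; rw [show π (Sum.inl b) = b from rfl] at hya; rw [hya]
            | inr b => right; rw [show π (Sum.inr b) = b from rfl] at hya; rw [hya]
          rcases hx' with rfl | rfl <;> rcases hy' with rfl | rfl
          · rfl
          · exact absurd ⟨hxσ, hyσ⟩ (hG σ hσG a)
          · exact absurd ⟨hyσ, hxσ⟩ (hG σ hσG a)
          · rfl
        have h1 : 1 ≤ m a := by
          have := hle i
          rw [hind σ (fun x => x) i, hee i, hπi] at this
          have hone : (σ.filter (fun i' => i' = i)).card = 1 := by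
            rw [Finset.filter_eq']
            simp [hiσ]
          omega
        omega
  -- now the main goal
  have e1 : fold n F '' ((fun σ => ∏ i ∈ σ, (X i : MvPolynomial (Fin n ⊕ Fin n) F)) '' G)
      = (fun s => monomial s (1:F)) '' ((fun σ : Finset (Fin n ⊕ Fin n) =>
          ∑ i ∈ σ, Finsupp.single (π i) 1) '' G) := by
    rw [Set.image_image, Set.image_image]
    refine Set.image_congr fun σ _ => ?_
    rw [map_prod, monomial_sum_one]
    refine Finset.prod_congr rfl fun i _ => ?_
    cases i <;> simp [fold, hπ] <;> rfl
  have e2 : ∀ j, fold n F '' ((fun i => (X i : MvPolynomial (Fin n ⊕ Fin n) F)) '' A j)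
      = X '' (π '' A j) := by
    intro j
    rw [Set.image_image, ← Set.image_comp]
    refine Set.image_congr fun i _ => ?_
    cases i <;> simp [fold, hπ, Function.comp]
  rw [e1]
  ext p
  rw [mem_ideal_span_monomial_image, Ideal.mem_iInf]
  simp only [e2]
  constructor
  · intro h j
    rw [mem_ideal_span_X_image]
    intro m hm
    obtain ⟨s, hs, hsm⟩ := h m hm
    obtain ⟨σ, hσG, rfl⟩ := hs
    exact (key m).mp ⟨σ, hσG, hsm⟩ j
  · intro h m hm
    obtain ⟨σ, hσG, hle⟩ := (key m).mpr (fun j => by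
      have := (mem_ideal_span_X_image).mp (h j) m hm
      exact this)
    exact ⟨_, ⟨σ, hσG, rfl⟩, hle⟩
end
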